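/- For any unit vector φ that is a product φ_A ⊗ φ_B, where φ_A involves the qudit together with the first n qubits (n ≤ k-1) and φ_B the remaining d-n qubits, the overlap with ψ = Σᵢ cᵢ|i⟩⊗|underline(2^{d-i})⟩ (with |c₁| ≥ ... ≥ |c_d|) satisfies |⟨φ,ψ⟩|² ≤ Σ_{i=1}^{k-1} |cᵢ|². -/

import Mathlib

open scoped BigOperators

/-- The `d`-qubit configuration `|2^{d-i}⟩` with a single `1` in position `i`. -/
def bitv (d : ℕ) (i : Fin d) : Fin d → Fin 2 := fun t => if t = i then 1 else 0

/-- Coefficients of `ψ = ∑ᵢ cᵢ |i⟩ ⊗ |2^{d-i}⟩` on the product basis of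
`ℂ^d ⊗ (ℂ²)^{⊗d}`. -/
noncomputable def psiC (d : ℕ) (c : Fin d → ℂ) : Fin d × (Fin d → Fin 2) → ℂ :=
  fun p => if p.2 = bitv d p.1 then c p.1 else 0

/-- two-term Cauchy-Schwarz with square roots -/
lemma two_term_cs (x1 x2 y1 y2 : ℝ) (hx1 : 0 ≤ x1) (hx2 : 0 ≤ x2) (hy1 : 0 ≤ y1)
    (hy2 : 0 ≤ y2) :
    x1 * y1 + x2 * y2 ≤ Real.sqrt (x1 ^ 2 + x2 ^ 2) * Real.sqrt (y1 ^ 2 + y2 ^ 2) := by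
  have h0 : 0 ≤ x1 * y1 + x2 * y2 := by positivity
  calc x1 * y1 + x2 * y2 = Real.sqrt ((x1 * y1 + x2 * y2) ^ 2) := (Real.sqrt_sq h0).symm
    _ ≤ Real.sqrt ((x1 ^ 2 + x2 ^ 2) * (y1 ^ 2 + y2 ^ 2)) := by
        apply Real.sqrt_le_sqrt; nlinarith [sq_nonneg (x1 * y2 - x2 * y1)]
    _ = Real.sqrt (x1 ^ 2 + x2 ^ 2) * Real.sqrt (y1 ^ 2 + y2 ^ 2) :=
        Real.sqrt_mul (by positivity) _

lemma le_sqrt_mul_sqrt_of_sq_le (p q r : ℝ) (hp : 0 ≤ p) (h : p ^ 2 ≤ q * r)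
    (hq : 0 ≤ q) : p ≤ Real.sqrt q * Real.sqrt r := by
  calc p = Real.sqrt (p ^ 2) := (Real.sqrt_sq hp).symm
    _ ≤ Real.sqrt (q * r) := Real.sqrt_le_sqrt h
    _ = Real.sqrt q * Real.sqrt r := Real.sqrt_mul hq _

set_option maxHeartbeats 1000000 in
/-- If the unit vector `φ` is a product `φ_A ⊗ φ_B`, with `φ_A` on the qudit together
with the first `n` qubits (`n ≤ k-1`) and `φ_B` on the remaining `d-n` qubits, then
`|⟨φ,ψ⟩|² ≤ ∑_{i=1}^{k-1} |cᵢ|²` for `ψ = ∑ᵢ cᵢ|i⟩⊗|2^{d-i}⟩` with sorted coefficients. -/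
theorem stmt_13 (d k n : ℕ) (hk : 2 ≤ k) (hkd : k ≤ d) (hn : n ≤ k - 1)
    (c : Fin d → ℂ)
    (hsort : ∀ i j : Fin d, i ≤ j → ‖c j‖ ≤ ‖c i‖)
    (hnorm : ∑ i : Fin d, ‖c i‖ ^ 2 = 1)
    (a : Fin d × ({x : Fin d // (x : ℕ) < n} → Fin 2) → ℂ)
    (b : ({x : Fin d // n ≤ (x : ℕ)} → Fin 2) → ℂ)
    (φ : Fin d × (Fin d → Fin 2) → ℂ)
    (hφ : ∀ (j : Fin d) (f : Fin d → Fin 2),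
      φ (j, f) = a (j, fun t => f t.1) * b (fun t => f t.1))
    (hφnorm : ∑ p : Fin d × (Fin d → Fin 2), ‖φ p‖ ^ 2 = 1) :
    ‖∑ p : Fin d × (Fin d → Fin 2), (starRingEnd ℂ) (φ p) * psiC d c p‖ ^ 2 ≤
      ∑ i ∈ Finset.univ.filter (fun i : Fin d => (i : ℕ) < k - 1), ‖c i‖ ^ 2 := by
  classical
  -- notation
  set T : ℝ := ∑ i ∈ Finset.univ.filter (fun i : Fin d => (i : ℕ) < k - 1), ‖c i‖ ^ 2 with hT
  have hTnonneg : 0 ≤ T := Finset.sum_nonneg fun i _ => by positivity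
  set gA : Fin d → ({x : Fin d // (x : ℕ) < n} → Fin 2) :=
    fun i => fun t => bitv d i t.1 with hgA
  set gB : Fin d → ({x : Fin d // n ≤ (x : ℕ)} → Fin 2) :=
    fun i => fun t => bitv d i t.1 with hgB
  set α : Fin d → ℝ := fun i => ‖a (i, gA i)‖ with hα
  set β : Fin d → ℝ := fun i => ‖b (gB i)‖ with hβ
  set A : ℝ := ∑ q : Fin d × ({x : Fin d // (x : ℕ) < n} → Fin 2), ‖a q‖ ^ 2 with hA
  set B : ℝ := ∑ h : ({x : Fin d // n ≤ (x : ℕ)} → Fin 2), ‖b h‖ ^ 2 with hB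
  have hAnonneg : 0 ≤ A := Finset.sum_nonneg fun q _ => by positivity
  have hBnonneg : 0 ≤ B := Finset.sum_nonneg fun q _ => by positivity
  set sA : Finset (Fin d) := Finset.univ.filter (fun i : Fin d => (i : ℕ) < n) with hsA
  set sB : Finset (Fin d) := Finset.univ.filter (fun i : Fin d => ¬ (i : ℕ) < n) with hsB
  have hnd : n < d := by omega
  set n' : Fin d := ⟨n, hnd⟩ with hn'
  set u : ℝ := ‖c n'‖ with hu
  set h0 : ({x : Fin d // n ≤ (x : ℕ)} → Fin 2) := fun _ => 0 with hh0
  set b0 : ℝ := ‖b h0‖ with hb0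
  -- Step 1 : compute the overlap
  have hS : (∑ p : Fin d × (Fin d → Fin 2), (starRingEnd ℂ) (φ p) * psiC d c p)
      = ∑ i : Fin d, (starRingEnd ℂ) (a (i, gA i)) * (starRingEnd ℂ) (b (gB i)) * c i := by
    rw [Fintype.sum_prod_type]
    refine Finset.sum_congr rfl fun i _ => ?_
    have h1 : ∀ f : Fin d → Fin 2, (starRingEnd ℂ) (φ (i, f)) * psiC d c (i, f)
        = if f = bitv d i then (starRingEnd ℂ) (φ (i, f)) * c i else 0 := by
      intro f; simp [psiC, mul_ite]
    rw [Finset.sum_congr rfl fun f _ => h1 f]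
    rw [Finset.sum_ite_eq' Finset.univ (bitv d i) (fun f => (starRingEnd ℂ) (φ (i, f)) * c i)]
    simp [hφ, hgA, hgB, mul_comm, mul_assoc, mul_left_comm]
  -- Step 2 : A * B = 1
  have hAB : A * B = 1 := by
    rw [hA, hB, ← hφnorm, Fintype.sum_prod_type, Fintype.sum_prod_type, Finset.sum_mul]
    refine Finset.sum_congr rfl fun j _ => ?_
    let e : (({x : Fin d // (x : ℕ) < n} → Fin 2) × ({x : Fin d // n ≤ (x : ℕ)} → Fin 2))
        ≃ (Fin d → Fin 2) :=
      { toFun := fun gh x => if hx : (x : ℕ) < n then gh.1 ⟨x, hx⟩ else gh.2 ⟨x, le_of_not_gt hx⟩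
        invFun := fun f => (fun t => f t.1, fun t => f t.1)
        left_inv := by
          rintro ⟨g, h⟩
          refine Prod.ext (funext fun t => ?_) (funext fun t => ?_)
          · simp only [dif_pos t.2]
          · simp only [dif_neg (not_lt.mpr t.2)]
        right_inv := by
          intro f; funext x
          by_cases hx : (x : ℕ) < n <;> simp [hx] }
    rw [← Equiv.sum_comp e (fun f => ‖φ (j, f)‖ ^ 2), Fintype.sum_prod_type,
      Finset.sum_mul_sum]
    refine Finset.sum_congr rfl fun g _ => ?_
    refine Finset.sum_congr rfl fun h _ => ?_
    have h1 : (fun t : {x : Fin d // (x : ℕ) < n} => e (g, h) t.1) = g := by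
      funext t; simp only [e, Equiv.coe_fn_mk, dif_pos t.2]
    have h2 : (fun t : {x : Fin d // n ≤ (x : ℕ)} => e (g, h) t.1) = h := by
      funext t; simp only [e, Equiv.coe_fn_mk, dif_neg (not_lt.mpr t.2)]
    rw [hφ, h1, h2, norm_mul, mul_pow]
  -- Step 3 : triangle inequality
  have hSle : ‖∑ p : Fin d × (Fin d → Fin 2), (starRingEnd ℂ) (φ p) * psiC d c p‖
      ≤ ∑ i : Fin d, α i * β i * ‖c i‖ := by
    rw [hS]
    refine (norm_sum_le _ _).trans (le_of_eq ?_)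
    refine Finset.sum_congr rfl fun i _ => ?_
    simp [norm_mul, hα, hβ]
  -- β is constant b0 on sA
  have hβA : ∀ i ∈ sA, β i = b0 := by
    intro i hi
    have hi' : (i : ℕ) < n := by simpa [hsA] using hi
    have : gB i = h0 := by
      funext t
      simp only [hgB, bitv, hh0]
      rw [if_neg]
      intro h
      have := congrArg Fin.val h
      have ht := t.2
      omega
    show ‖b (gB i)‖ = b0
    rw [this]
  -- Sums of α² are bounded by A
  have hαA : ∑ i : Fin d, α i ^ 2 ≤ A := by
    have hinj : ∀ x ∈ Finset.univ, ∀ y ∈ Finset.univ,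
        (fun i : Fin d => (i, gA i)) x = (fun i : Fin d => (i, gA i)) y → x = y := by
      intro x _ y _ h
      exact (Prod.ext_iff.1 h).1
    have := Finset.sum_image (f := fun q : Fin d × ({x : Fin d // (x : ℕ) < n} → Fin 2)
      => ‖a q‖ ^ 2) hinj
    rw [hA]
    calc ∑ i : Fin d, α i ^ 2
        = ∑ q ∈ Finset.univ.image (fun i : Fin d => (i, gA i)), ‖a q‖ ^ 2 := by
          rw [this]
      _ ≤ _ := Finset.sum_le_sum_of_subset_of_nonneg (Finset.subset_univ _)
          (fun q _ _ => by positivity)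
  -- b0² + sum of β² over sB is bounded by B
  have hβB : b0 ^ 2 + ∑ i ∈ sB, β i ^ 2 ≤ B := by
    have hmem : ∀ i ∈ sB, n ≤ (i : ℕ) := by
      intro i hi
      simp only [hsB, Finset.mem_filter, Finset.mem_univ, true_and] at hi
      omega
    have hval : ∀ i (hi : i ∈ sB), gB i ⟨i, hmem i hi⟩ = 1 := by
      intro i hi; simp [hgB, bitv]
    have hinj : ∀ x ∈ sB, ∀ y ∈ sB, gB x = gB y → x = y := by
      intro x hx y hy h
      have h1 := hval x hx
      have h2 : gB y ⟨x, hmem x hx⟩ = if (⟨x, hmem x hx⟩ : {t : Fin d // n ≤ (t : ℕ)}).1 = y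
          then 1 else 0 := rfl
      rw [h] at h1
      rw [h2] at h1
      by_contra hne
      rw [if_neg (by simpa using hne)] at h1
      exact absurd h1 (by decide)
    have hnotmem : h0 ∉ sB.image gB := by
      intro hmem'
      obtain ⟨i, hi, hgBi⟩ := Finset.mem_image.mp hmem'
      have := hval i hi
      rw [hgBi] at this
      exact absurd this (by simp [hh0])
    have heq : ∑ i ∈ sB, β i ^ 2 = ∑ h ∈ sB.image gB, ‖b h‖ ^ 2 :=
      (Finset.sum_image (f := fun h => ‖b h‖ ^ 2) hinj).symm
    calc b0 ^ 2 + ∑ i ∈ sB, β i ^ 2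
        = ∑ h ∈ insert h0 (sB.image gB), ‖b h‖ ^ 2 := by
          rw [Finset.sum_insert hnotmem, heq, hb0]
      _ ≤ B := Finset.sum_le_sum_of_subset_of_nonneg (Finset.subset_univ _)
          (fun q _ _ => by positivity)
  -- coefficient bounds
  have hC1T : ∑ i ∈ sA, ‖c i‖ ^ 2 ≤ T := by
    rw [hT]
    refine Finset.sum_le_sum_of_subset_of_nonneg ?_ (fun i _ _ => by positivity)
    intro i hi
    simp only [hsA, Finset.mem_filter, Finset.mem_univ, true_and] at hi ⊢
    omega
  have huT : u ^ 2 ≤ T := by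
    have h0d : (0 : ℕ) < d := by omega
    have h1 : u ≤ ‖c ⟨0, h0d⟩‖ := hsort ⟨0, h0d⟩ n' (by simp [Fin.le_def])
    have h2 : ‖c ⟨0, h0d⟩‖ ^ 2 ≤ T := by
      rw [hT]
      refine Finset.single_le_sum (f := fun i => ‖c i‖ ^ 2) (fun i _ => by positivity) ?_
      simp only [Finset.mem_filter, Finset.mem_univ, true_and]
      omega
    calc u ^ 2 ≤ ‖c ⟨0, h0d⟩‖ ^ 2 := by
          have : 0 ≤ u := norm_nonneg _
          nlinarith
      _ ≤ T := h2
  -- split and bound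
  set P1 : ℝ := ∑ i ∈ sA, α i * ‖c i‖ with hP1
  set P2 : ℝ := ∑ i ∈ sB, α i * β i with hP2
  have hP1nonneg : 0 ≤ P1 := Finset.sum_nonneg fun i _ => by positivity
  have hP2nonneg : 0 ≤ P2 := Finset.sum_nonneg fun i _ => by positivity
  set A1 : ℝ := ∑ i ∈ sA, α i ^ 2 with hA1
  set A2 : ℝ := ∑ i ∈ sB, α i ^ 2 with hA2
  set C1 : ℝ := ∑ i ∈ sA, ‖c i‖ ^ 2 with hC1
  set B2 : ℝ := ∑ i ∈ sB, β i ^ 2 with hB2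
  have hA1nonneg : 0 ≤ A1 := Finset.sum_nonneg fun i _ => by positivity
  have hA2nonneg : 0 ≤ A2 := Finset.sum_nonneg fun i _ => by positivity
  have hC1nonneg : 0 ≤ C1 := Finset.sum_nonneg fun i _ => by positivity
  have hB2nonneg : 0 ≤ B2 := Finset.sum_nonneg fun i _ => by positivity
  have hA12 : A1 + A2 ≤ A := by
    have hsum := Finset.sum_filter_add_sum_filter_not Finset.univ
      (fun i : Fin d => (i : ℕ) < n) (fun i => α i ^ 2)
    calc A1 + A2 = ∑ i : Fin d, α i ^ 2 := hsum
      _ ≤ A := hαA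
  have hsplit : (∑ i : Fin d, α i * β i * ‖c i‖)
      = (∑ i ∈ sA, α i * β i * ‖c i‖) + ∑ i ∈ sB, α i * β i * ‖c i‖ :=
    (Finset.sum_filter_add_sum_filter_not Finset.univ (fun i : Fin d => (i : ℕ) < n) _).symm
  have hT1 : (∑ i ∈ sA, α i * β i * ‖c i‖) = b0 * P1 := by
    rw [hP1, Finset.mul_sum]
    refine Finset.sum_congr rfl fun i hi => ?_
    rw [hβA i hi]; ring
  have hT2 : (∑ i ∈ sB, α i * β i * ‖c i‖) ≤ u * P2 := by
    rw [hP2, Finset.mul_sum]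
    refine Finset.sum_le_sum fun i hi => ?_
    have hni : n ≤ (i : ℕ) := by
      have : ¬ (i : ℕ) < n := by simpa [hsB] using hi
      omega
    have hci : ‖c i‖ ≤ u := hsort n' i (Fin.le_def.mpr hni)
    have hαi : 0 ≤ α i := norm_nonneg _
    have hβi : 0 ≤ β i := norm_nonneg _
    calc α i * β i * ‖c i‖ ≤ α i * β i * u := by
          apply mul_le_mul_of_nonneg_left hci (by positivity)
      _ = u * (α i * β i) := by ring
  have hCS1 : P1 ≤ Real.sqrt A1 * Real.sqrt C1 :=
    le_sqrt_mul_sqrt_of_sq_le _ _ _ hP1nonneg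
      (Finset.sum_mul_sq_le_sq_mul_sq sA α (fun i => ‖c i‖)) hA1nonneg
  have hCS2 : P2 ≤ Real.sqrt A2 * Real.sqrt B2 :=
    le_sqrt_mul_sqrt_of_sq_le _ _ _ hP2nonneg
      (Finset.sum_mul_sq_le_sq_mul_sq sB α β) hA2nonneg
  have hsqC1 : Real.sqrt C1 ≤ Real.sqrt T := Real.sqrt_le_sqrt hC1T
  have hsqu : u ≤ Real.sqrt T := by
    have : u = Real.sqrt (u ^ 2) := (Real.sqrt_sq (norm_nonneg _)).symm
    rw [this]; exact Real.sqrt_le_sqrt huT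
  -- main chain
  have hmain : ‖∑ p : Fin d × (Fin d → Fin 2), (starRingEnd ℂ) (φ p) * psiC d c p‖
      ≤ Real.sqrt T := by
    calc ‖∑ p : Fin d × (Fin d → Fin 2), (starRingEnd ℂ) (φ p) * psiC d c p‖
        ≤ ∑ i : Fin d, α i * β i * ‖c i‖ := hSle
      _ = (∑ i ∈ sA, α i * β i * ‖c i‖) + ∑ i ∈ sB, α i * β i * ‖c i‖ := hsplit
      _ ≤ b0 * P1 + u * P2 := by rw [hT1]; exact add_le_add (le_refl _) hT2
      _ ≤ b0 * (Real.sqrt A1 * Real.sqrt C1) + u * (Real.sqrt A2 * Real.sqrt B2) := by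
          have hb0n : 0 ≤ b0 := norm_nonneg _
          have hun : 0 ≤ u := norm_nonneg _
          exact add_le_add (mul_le_mul_of_nonneg_left hCS1 hb0n)
            (mul_le_mul_of_nonneg_left hCS2 hun)
      _ ≤ Real.sqrt T * (Real.sqrt A1 * b0) + Real.sqrt T * (Real.sqrt A2 * Real.sqrt B2) := by
          have hb0n : 0 ≤ b0 := norm_nonneg _
          refine add_le_add ?_ ?_
          · have : b0 * (Real.sqrt A1 * Real.sqrt C1) = (b0 * Real.sqrt A1) * Real.sqrt C1 := by
              ring
            rw [this]
            have h2 : (b0 * Real.sqrt A1) * Real.sqrt C1 ≤ (b0 * Real.sqrt A1) * Real.sqrt T :=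
              mul_le_mul_of_nonneg_left hsqC1 (mul_nonneg (norm_nonneg _) (Real.sqrt_nonneg _))
            linarith [h2]
          · exact mul_le_mul_of_nonneg_right hsqu
              (mul_nonneg (Real.sqrt_nonneg _) (Real.sqrt_nonneg _))
      _ = Real.sqrt T * (Real.sqrt A1 * b0 + Real.sqrt A2 * Real.sqrt B2) := by ring
      _ ≤ Real.sqrt T * (Real.sqrt (Real.sqrt A1 ^ 2 + Real.sqrt A2 ^ 2)
            * Real.sqrt (b0 ^ 2 + Real.sqrt B2 ^ 2)) := by
          refine mul_le_mul_of_nonneg_left ?_ (Real.sqrt_nonneg _)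
          exact two_term_cs _ _ _ _ (Real.sqrt_nonneg _) (Real.sqrt_nonneg _)
            (norm_nonneg _) (Real.sqrt_nonneg _)
      _ ≤ Real.sqrt T * (Real.sqrt A * Real.sqrt B) := by
          rw [Real.sq_sqrt hA1nonneg, Real.sq_sqrt hA2nonneg, Real.sq_sqrt hB2nonneg]
          refine mul_le_mul_of_nonneg_left ?_ (Real.sqrt_nonneg _)
          exact mul_le_mul (Real.sqrt_le_sqrt hA12) (Real.sqrt_le_sqrt hβB)
            (Real.sqrt_nonneg _) (Real.sqrt_nonneg _)
      _ = Real.sqrt T := by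
          rw [← Real.sqrt_mul hAnonneg, hAB, Real.sqrt_one, mul_one]
  calc ‖∑ p : Fin d × (Fin d → Fin 2), (starRingEnd ℂ) (φ p) * psiC d c p‖ ^ 2
      ≤ Real.sqrt T ^ 2 := by
        apply pow_le_pow_left₀ (norm_nonneg _) hmain
    _ = T := Real.sq_sqrt hTnonneg
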